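/- Let G=(V,E) be a finite simple undirected graph, let x : E → ℝ≥0 satisfy ∑_{e ∈ δ(v)} x_e ≤ 1 for every vertex v ∈ V, and let A be a random subset of V whose distribution satisfies (i) Pr[v ∈ A] = ∑_{e ∈ δ(v)} x_e for every v ∈ V, and (ii) Pr[u ∈ A and v ∈ A] = Pr[u ∈ A] · Pr[v ∈ A] for every edge {u,v} ∈ E. Then E[ η(A, E ∩ (A choose 2)) ] ≥ (∑_{e ∈ E} x_e)² / |V|, where η(A, E ∩ (A choose 2)) denotes the maximum cardinality of a matching in the subgraph of G induced by A. -/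

import Mathlib

open scoped Classical
open Finset

noncomputable def inducedMatchingNumber {V : Type} [Fintype V] [DecidableEq V]
    (G : SimpleGraph V) [DecidableRel G.Adj] (S : Finset V) : ℕ :=
  ((G.edgeFinset.filter (fun e => ∀ v ∈ e, v ∈ S)).powerset.filter
      (fun M => ∀ e ∈ M, ∀ f ∈ M, e ≠ f → ∀ v : V, v ∈ e → v ∉ f)).sup Finset.card

private lemma sym2_rep {V : Type} (e : Sym2 V) : ∃ a b, e = s(a, b) :=
  Sym2.inductionOn e fun a b => ⟨a, b, rfl⟩

private lemma greedy_matching {V : Type} [DecidableEq V] (w : Sym2 V → ℝ)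
    (F : Finset (Sym2 V)) : ∃ M, M ⊆ F ∧
      (∀ f ∈ M, ∀ g ∈ M, f ≠ g → ∀ v : V, v ∈ f → v ∉ g) ∧
      (∀ e ∈ F, ∃ f ∈ M, (∃ c, c ∈ f ∧ c ∈ e) ∧ w e ≤ w f) := by
  induction F using Finset.strongInduction with
  | _ F ih =>
    rcases F.eq_empty_or_nonempty with rfl | hne
    · exact ⟨∅, by simp, by simp, by simp⟩
    obtain ⟨f, hfF, hfmax⟩ := F.exists_max_image w hne
    obtain ⟨a, b, rfl⟩ := sym2_rep f
    have hss : F.filter (fun e => ∀ v ∈ s(a,b), v ∉ e) ⊂ F := by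
      refine Finset.filter_ssubset.mpr ⟨s(a,b), hfF, fun h => ?_⟩
      exact h a (Sym2.mem_mk_left a b) (Sym2.mem_mk_left a b)
    obtain ⟨M', hM'sub, hmatch', hcov'⟩ := ih _ hss
    have hM'F : M' ⊆ F := hM'sub.trans (Finset.filter_subset _ _)
    refine ⟨insert s(a,b) M', Finset.insert_subset hfF hM'F, ?_, ?_⟩
    · intro f hf g hg hfg v hvf
      rcases Finset.mem_insert.mp hf with rfl | hf
      · rcases Finset.mem_insert.mp hg with rfl | hg
        · exact absurd rfl hfg
        · exact (Finset.mem_filter.mp (hM'sub hg)).2 v hvf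
      · rcases Finset.mem_insert.mp hg with rfl | hg
        · intro hvg; exact (Finset.mem_filter.mp (hM'sub hf)).2 v hvg hvf
        · exact hmatch' f hf g hg hfg v hvf
    · intro e he
      by_cases hef : ∀ v ∈ s(a,b), v ∉ e
      · obtain ⟨f', hf', hc, hw⟩ := hcov' e (Finset.mem_filter.mpr ⟨he, hef⟩)
        exact ⟨f', Finset.mem_insert_of_mem hf', hc, hw⟩
      · push_neg at hef
        obtain ⟨c, hcf, hce⟩ := hef
        exact ⟨s(a,b), Finset.mem_insert_self _ _, ⟨c, hcf, hce⟩, hfmax e he⟩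

theorem stmt_1 {V : Type} [Fintype V] [DecidableEq V]
    (G : SimpleGraph V) [DecidableRel G.Adj]
    (x : Sym2 V → ℝ) (hx : ∀ e ∈ G.edgeFinset, 0 ≤ x e)
    (hdeg : ∀ v : V, ∑ e ∈ G.edgeFinset.filter (fun e => v ∈ e), x e ≤ 1)
    (p : Finset V → ℝ) (hp0 : ∀ S : Finset V, 0 ≤ p S)
    (hp1 : ∑ S : Finset V, p S = 1)
    (hmarg : ∀ v : V,
      ∑ S ∈ (Finset.univ : Finset (Finset V)).filter (fun S => v ∈ S), p S
        = ∑ e ∈ G.edgeFinset.filter (fun e => v ∈ e), x e)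
    (hind : ∀ u v : V, G.Adj u v →
      ∑ S ∈ (Finset.univ : Finset (Finset V)).filter (fun S => u ∈ S ∧ v ∈ S), p S
        = (∑ S ∈ (Finset.univ : Finset (Finset V)).filter (fun S => u ∈ S), p S)
          * (∑ S ∈ (Finset.univ : Finset (Finset V)).filter (fun S => v ∈ S), p S)) :
    (∑ e ∈ G.edgeFinset, x e) ^ 2 / (Fintype.card V : ℝ)
      ≤ ∑ S : Finset V, p S * (inducedMatchingNumber G S : ℝ) := by
  classical
  set q : V → ℝ := fun v => ∑ e ∈ G.edgeFinset.filter (fun e => v ∈ e), x e with hqdef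
  have hq0 : ∀ v, 0 ≤ q v := fun v =>
    Finset.sum_nonneg fun e he => hx e (Finset.mem_filter.mp he).1
  set F : Finset (Sym2 V) := G.edgeFinset.filter (fun e => 0 < x e) with hFdef
  have hFE : F ⊆ G.edgeFinset := Finset.filter_subset _ _
  have hx0F : ∀ e ∈ F, 0 ≤ x e := fun e he => (Finset.mem_filter.mp he).2.le
  have hqv : ∀ (v : V), ∀ e ∈ F, v ∈ e → x e ≤ q v := by
    intro v e he hv
    exact Finset.single_le_sum (f := x) (fun e' he' => hx e' (Finset.mem_filter.mp he').1)
      (Finset.mem_filter.mpr ⟨hFE he, hv⟩)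
  have hqpos : ∀ e ∈ F, ∀ v ∈ e, 0 < q v := fun e he v hv =>
    lt_of_lt_of_le (Finset.mem_filter.mp he).2 (hqv v e he hv)
  -- the vertex-degree sum bound restricted to F
  have hSv : ∀ v : V, ∑ e ∈ F.filter (fun e => v ∈ e), x e ≤ q v := by
    intro v
    refine Finset.sum_le_sum_of_subset_of_nonneg ?_ (fun e he _ => hx e (Finset.mem_filter.mp he).1)
    intro e he
    obtain ⟨heF, hv⟩ := Finset.mem_filter.mp he
    exact Finset.mem_filter.mpr ⟨hFE heF, hv⟩
  set w : Sym2 V → ℝ := Sym2.lift ⟨fun a b => q a * q b, fun a b => mul_comm _ _⟩ with hwdef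
  set ψ : Sym2 V → ℝ := Sym2.lift ⟨fun a b => (q a)⁻¹ + (q b)⁻¹, fun a b => add_comm _ _⟩ with hψdef
  have hwmk : ∀ a b : V, w s(a,b) = q a * q b := fun a b => rfl
  have hψmk : ∀ a b : V, ψ s(a,b) = (q a)⁻¹ + (q b)⁻¹ := fun a b => rfl
  obtain ⟨M, hMF, hmatch, hcov⟩ := greedy_matching w F
  have hcov2 : ∀ e : Sym2 V, ∃ f, e ∈ F → (f ∈ M ∧ (∃ c, c ∈ f ∧ c ∈ e) ∧ w e ≤ w f) := by
    intro e
    by_cases he : e ∈ F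
    · obtain ⟨f, hf, h1, h2⟩ := hcov e he
      exact ⟨f, fun _ => ⟨hf, h1, h2⟩⟩
    · exact ⟨e, fun h => absurd h he⟩
  choose φ hφ using hcov2
  have hφM : ∀ e ∈ F, φ e ∈ M := fun e he => (hφ e he).1
  -- X_f : the x-mass charged to f
  set Xf : Sym2 V → ℝ := fun f => ∑ e ∈ F.filter (fun e => φ e = f), x e with hXfdef
  have hXf0 : ∀ f, 0 ≤ Xf f := fun f =>
    Finset.sum_nonneg fun e he => hx0F e (Finset.mem_filter.mp he).1
  have hfib : ∀ g : Sym2 V → ℝ, ∑ f ∈ M, (∑ e ∈ F.filter (fun e => φ e = f), g e)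
      = ∑ e ∈ F, g e := fun g => Finset.sum_fiberwise_of_maps_to hφM g
  -- key1 : mass charged to f is at most q a + q b
  have key1 : ∀ a b : V, s(a,b) ∈ M → Xf s(a,b) ≤ q a + q b := by
    intro a b hf
    have hsub : F.filter (fun e => φ e = s(a,b))
        ⊆ F.filter (fun e => a ∈ e) ∪ F.filter (fun e => b ∈ e) := by
      intro e he
      obtain ⟨heF, hφe⟩ := Finset.mem_filter.mp he
      obtain ⟨c, hcf, hce⟩ := (hφ e heF).2.1
      rw [hφe, Sym2.mem_iff] at hcf
      rcases hcf with rfl | rfl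
      · exact Finset.mem_union_left _ (Finset.mem_filter.mpr ⟨heF, hce⟩)
      · exact Finset.mem_union_right _ (Finset.mem_filter.mpr ⟨heF, hce⟩)
    calc Xf s(a,b) ≤ ∑ e ∈ F.filter (fun e => a ∈ e) ∪ F.filter (fun e => b ∈ e), x e := by
          refine Finset.sum_le_sum_of_subset_of_nonneg hsub ?_
          intro e he _
          rcases Finset.mem_union.mp he with h | h
          · exact hx0F e (Finset.mem_filter.mp h).1
          · exact hx0F e (Finset.mem_filter.mp h).1
      _ ≤ (∑ e ∈ F.filter (fun e => a ∈ e), x e) + ∑ e ∈ F.filter (fun e => b ∈ e), x e := by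
          have h1 := Finset.sum_union_inter (s₁ := F.filter (fun e => a ∈ e))
            (s₂ := F.filter (fun e => b ∈ e)) (f := x)
          have hnn : 0 ≤ ∑ e ∈ (F.filter (fun e => a ∈ e)) ∩ (F.filter (fun e => b ∈ e)), x e :=
            Finset.sum_nonneg fun e he =>
              hx0F e (Finset.mem_filter.mp (Finset.mem_inter.mp he).1).1
          linarith
      _ ≤ q a + q b := add_le_add (hSv a) (hSv b)
  -- key2 : the charged edge dominates in ψ
  have key2 : ∀ e ∈ F, ψ (φ e) ≤ ψ e := by
    intro e he
    obtain ⟨hfM, ⟨c, hcf, hce⟩, hwe⟩ := hφ e he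
    have hde : s(c, Sym2.Mem.other hce) = e := Sym2.other_spec hce
    have hdm : Sym2.Mem.other hce ∈ e := Sym2.other_mem hce
    have hc'e : s(c, Sym2.Mem.other hcf) = φ e := Sym2.other_spec hcf
    have hc'm : Sym2.Mem.other hcf ∈ φ e := Sym2.other_mem hcf
    set d := Sym2.Mem.other hce
    set c' := Sym2.Mem.other hcf
    have hcpos : 0 < q c := hqpos e he c hce
    have hdpos : 0 < q d := hqpos e he d hdm
    have hc'pos : 0 < q c' := hqpos (φ e) (hMF hfM) c' hc'm
    have hw1 : w e = q c * q d := by rw [← hde]; exact hwmk c d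
    have hw2 : w (φ e) = q c * q c' := by rw [← hc'e]; exact hwmk c c'
    have hdc' : q d ≤ q c' := by
      refine le_of_mul_le_mul_left ?_ hcpos
      rw [← hw1, ← hw2]; exact hwe
    have hψ1 : ψ e = (q c)⁻¹ + (q d)⁻¹ := by rw [← hde]; exact hψmk c d
    have hψ2 : ψ (φ e) = (q c)⁻¹ + (q c')⁻¹ := by rw [← hc'e]; exact hψmk c c'
    rw [hψ1, hψ2]
    have : (q c')⁻¹ ≤ (q d)⁻¹ := inv_anti₀ hdpos hdc'
    linarith
  -- key4 : sum of charged ψ-masses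
  have key4 : ∑ f ∈ M, Xf f * ψ f ≤ ∑ e ∈ F, x e * ψ e := by
    rw [← hfib (fun e => x e * ψ e)]
    refine Finset.sum_le_sum ?_
    intro f hf
    rw [hXfdef]
    simp only
    rw [Finset.sum_mul]
    refine Finset.sum_le_sum ?_
    intro e he
    obtain ⟨heF, hφe⟩ := Finset.mem_filter.mp he
    have : ψ f ≤ ψ e := hφe ▸ key2 e heF
    exact mul_le_mul_of_nonneg_left this (hx0F e heF)
  -- key5 : total ψ-mass is at most the number of vertices
  have key5 : ∑ e ∈ F, x e * ψ e ≤ (Fintype.card V : ℝ) := by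
    have hrw : ∀ e ∈ F, x e * ψ e
        = ∑ v ∈ Finset.univ.filter (fun v => v ∈ e), x e * (q v)⁻¹ := by
      intro e he
      obtain ⟨c, d, rfl⟩ := sym2_rep e
      have hcd : c ≠ d := by
        intro h
        exact G.not_isDiag_of_mem_edgeFinset (hFE he) (h ▸ Sym2.mk_isDiag_iff.mpr rfl)
      have hset : Finset.univ.filter (fun v => v ∈ s(c,d)) = {c, d} := by
        ext v
        simp [Sym2.mem_iff]
      rw [hset, Finset.sum_pair hcd, hψmk]
      ring
    rw [Finset.sum_congr rfl hrw]
    have hswap : ∑ e ∈ F, ∑ v ∈ Finset.univ.filter (fun v => v ∈ e), x e * (q v)⁻¹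
        = ∑ v : V, ∑ e ∈ F.filter (fun e => v ∈ e), x e * (q v)⁻¹ := by
      simp only [Finset.sum_filter]
      exact Finset.sum_comm
    rw [hswap]
    calc ∑ v : V, ∑ e ∈ F.filter (fun e => v ∈ e), x e * (q v)⁻¹
        ≤ ∑ v : V, (1 : ℝ) := by
          refine Finset.sum_le_sum ?_
          intro v _
          rw [← Finset.sum_mul]
          rcases eq_or_lt_of_le (hq0 v) with hq | hq
          · have h0 : ∑ e ∈ F.filter (fun e => v ∈ e), x e = 0 :=
              le_antisymm (le_of_le_of_eq (hSv v) hq.symm)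
                (Finset.sum_nonneg fun e he => hx0F e (Finset.mem_filter.mp he).1)
            rw [h0, zero_mul]; norm_num
          · calc (∑ e ∈ F.filter (fun e => v ∈ e), x e) * (q v)⁻¹
                ≤ q v * (q v)⁻¹ :=
                  mul_le_mul_of_nonneg_right (hSv v) (inv_nonneg.mpr (hq0 v))
              _ = 1 := mul_inv_cancel₀ hq.ne'
      _ = (Fintype.card V : ℝ) := by simp
  -- positivity of w on M
  have hwpos : ∀ f ∈ M, 0 < w f := by
    intro f hf
    obtain ⟨a, b, rfl⟩ := sym2_rep f
    rw [hwmk]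
    exact mul_pos (hqpos _ (hMF hf) a (Sym2.mem_mk_left a b))
      (hqpos _ (hMF hf) b (Sym2.mem_mk_right a b))
  -- key7 : per-f bound on Xf² / w
  have key7 : ∀ f ∈ M, Xf f ^ 2 / w f ≤ Xf f * ψ f := by
    intro f hf
    obtain ⟨a, b, rfl⟩ := sym2_rep f
    have hqa : 0 < q a := hqpos _ (hMF hf) a (Sym2.mem_mk_left a b)
    have hqb : 0 < q b := hqpos _ (hMF hf) b (Sym2.mem_mk_right a b)
    rw [div_le_iff₀ (hwpos _ hf)]
    have hψw : ψ s(a,b) * w s(a,b) = q a + q b := by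
      rw [hψmk, hwmk]
      field_simp
      ring
    calc Xf s(a,b) ^ 2 = Xf s(a,b) * Xf s(a,b) := sq (Xf s(a,b))
      _ ≤ Xf s(a,b) * (q a + q b) :=
          mul_le_mul_of_nonneg_left (key1 a b hf) (hXf0 _)
      _ = Xf s(a,b) * ψ s(a,b) * w s(a,b) := by rw [mul_assoc, hψw]
  -- Cauchy–Schwarz
  have hCS : (∑ e ∈ F, x e) ^ 2 ≤ (∑ f ∈ M, w f) * ∑ f ∈ M, (Xf f ^ 2 / w f) := by
    rw [← hfib x]
    exact Finset.sum_sq_le_sum_mul_sum_of_sq_eq_mul M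
      (fun f hf => (hwpos f hf).le)
      (fun f hf => div_nonneg (sq_nonneg _) (hwpos f hf).le)
      (fun f hf => (mul_div_cancel₀ _ (hwpos f hf).ne').symm)
  -- Part A : each matching edge's weight is the probability both endpoints appear
  have hwS : ∀ f ∈ M, w f = ∑ S ∈ Finset.univ.filter (fun S => ∀ v ∈ f, v ∈ S), p S := by
    intro f hf
    obtain ⟨a, b, rfl⟩ := sym2_rep f
    have hadj : G.Adj a b := (SimpleGraph.mem_edgeSet G).mp
      (SimpleGraph.mem_edgeFinset.mp (hFE (hMF hf)))
    have hfilter : Finset.univ.filter (fun S : Finset V => ∀ v ∈ s(a,b), v ∈ S)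
        = Finset.univ.filter (fun S => a ∈ S ∧ b ∈ S) := by
      refine Finset.filter_congr ?_
      intro S _
      constructor
      · intro h
        exact ⟨h a (Sym2.mem_mk_left a b), h b (Sym2.mem_mk_right a b)⟩
      · intro h v hv
        rcases Sym2.mem_iff.mp hv with rfl | rfl
        · exact h.1
        · exact h.2
    rw [hfilter, hind a b hadj, hmarg a, hmarg b, hwmk]
  have hA : ∑ f ∈ M, w f ≤ ∑ S : Finset V, p S * (inducedMatchingNumber G S : ℝ) := by
    have hcard : ∀ S : Finset V,
        ((M.filter (fun f => ∀ v ∈ f, v ∈ S)).card : ℝ)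
          ≤ (inducedMatchingNumber G S : ℝ) := by
      intro S
      refine Nat.cast_le.mpr (Finset.le_sup ?_)
      refine Finset.mem_filter.mpr ⟨Finset.mem_powerset.mpr ?_, ?_⟩
      · intro f hf
        obtain ⟨hfM, hfS⟩ := Finset.mem_filter.mp hf
        exact Finset.mem_filter.mpr ⟨hFE (hMF hfM), hfS⟩
      · intro e he f hf hef v hv
        exact hmatch e (Finset.mem_filter.mp he).1 f (Finset.mem_filter.mp hf).1 hef v hv
    have hsum : ∑ f ∈ M, w f
        = ∑ S : Finset V, p S * ((M.filter (fun f => ∀ v ∈ f, v ∈ S)).card : ℝ) := by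
      have hterm : ∀ S : Finset V, p S * ((M.filter (fun f => ∀ v ∈ f, v ∈ S)).card : ℝ)
          = ∑ f ∈ M, if (∀ v ∈ f, v ∈ S) then p S else 0 := by
        intro S
        rw [Finset.card_filter]
        push_cast
        rw [Finset.mul_sum]
        refine Finset.sum_congr rfl ?_
        intro f _
        split <;> simp
      rw [Finset.sum_congr rfl (fun S _ => hterm S), Finset.sum_comm]
      refine Finset.sum_congr rfl ?_
      intro f hf
      rw [← Finset.sum_filter, ← hwS f hf]
    rw [hsum]
    refine Finset.sum_le_sum ?_
    intro S _
    exact mul_le_mul_of_nonneg_left (hcard S) (hp0 S)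
  -- assemble everything
  have hXpos : (∑ e ∈ G.edgeFinset, x e) = ∑ e ∈ F, x e := by
    rw [hFdef]
    exact (Finset.sum_filter_of_ne (fun e he h => lt_of_le_of_ne (hx e he) (Ne.symm h))).symm
  have hfinal : (∑ e ∈ G.edgeFinset, x e) ^ 2 ≤ (Fintype.card V : ℝ) * ∑ f ∈ M, w f := by
    calc (∑ e ∈ G.edgeFinset, x e) ^ 2 = (∑ e ∈ F, x e) ^ 2 := by rw [hXpos]
      _ ≤ (∑ f ∈ M, w f) * ∑ f ∈ M, (Xf f ^ 2 / w f) := hCS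
      _ ≤ (∑ f ∈ M, w f) * ∑ f ∈ M, (Xf f * ψ f) := by
          refine mul_le_mul_of_nonneg_left (Finset.sum_le_sum key7) ?_
          exact Finset.sum_nonneg fun f hf => (hwpos f hf).le
      _ ≤ (∑ f ∈ M, w f) * (Fintype.card V : ℝ) := by
          refine mul_le_mul_of_nonneg_left (key4.trans key5) ?_
          exact Finset.sum_nonneg fun f hf => (hwpos f hf).le
      _ = (Fintype.card V : ℝ) * ∑ f ∈ M, w f := mul_comm _ _
  rcases Nat.eq_zero_or_pos (Fintype.card V) with hn | hn
  · rw [hn]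
    simp only [Nat.cast_zero, div_zero]
    exact Finset.sum_nonneg fun S _ => mul_nonneg (hp0 S) (Nat.cast_nonneg _)
  · have hn' : (0:ℝ) < (Fintype.card V : ℝ) := by exact_mod_cast hn
    rw [div_le_iff₀ hn']
    calc (∑ e ∈ G.edgeFinset, x e) ^ 2
        ≤ (Fintype.card V : ℝ) * ∑ f ∈ M, w f := hfinal
      _ = (∑ f ∈ M, w f) * (Fintype.card V : ℝ) := mul_comm _ _
      _ ≤ (∑ S : Finset V, p S * (inducedMatchingNumber G S : ℝ)) * (Fintype.card V : ℝ) :=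
          mul_le_mul_of_nonneg_right hA hn'.le
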